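/- Let W be a symmetric positive semidefinite p x p real matrix, Gamma* a p x p real matrix, lambda_bar > 0, nu0 > 0 and eta0 > 1; let S_j = supp(Gamma*_{.j}) for each j. Assume: (a) the compatibility condition holds for each S_j, i.e., for every b in R^p with sum_{l not in S_j} |b_l| <= eta0 * sum_{l in S_j} |b_l| one has nu0^2 * (sum_{l in S_j} |b_l|)^2 <= |S_j| * (b^T W b); (b) ||W Gamma* - I_p||_max <= lambda_bar; and (c) A0_bar >= (eta0 + 1)/(eta0 - 1). If Gamma_hat minimizes the objective Obj(G) = (1/2) Tr(G^T W G) - Tr(G) + A0_bar * lambda_bar * ||G||_{L1} over all p x p matrices G, then for every j = 1,...,p: ||Gamma_hat_{.j} - Gamma*_{.j}||_1 <= (8 * A0_bar^2 * nu0^{-2} / (A0_bar - 1)) * |S_j| * lambda_bar. -/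

import Mathlib

open MeasureTheory ProbabilityTheory Real Finset
open scoped Classical ENNReal

noncomputable section

/-- Number of nonzero entries of a vector (the "ℓ0 norm"). -/
def nnz {ι : Type*} (v : ι → ℝ) : ℕ := (Function.support v).ncard

/-- ℓ¹ norm of a finitely supported vector. -/
def l1 {ι : Type*} [Fintype ι] (v : ι → ℝ) : ℝ := ∑ i, |v i|

/-- ℓ² norm. -/
def l2 {ι : Type*} [Fintype ι] (v : ι → ℝ) : ℝ := Real.sqrt (∑ i, (v i) ^ 2)

/-- ℓ∞ norm. -/
def linf {ι : Type*} [Fintype ι] (v : ι → ℝ) : ℝ := ⨆ i, |v i|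

/-- Euclidean inner product. -/
def dot {ι : Type*} [Fintype ι] (u v : ι → ℝ) : ℝ := ∑ i, u i * v i

/-- Entrywise max norm of a matrix. -/
def matMax {ι κ : Type*} [Fintype ι] [Fintype κ] (A : Matrix ι κ ℝ) : ℝ :=
  ⨆ i, ⨆ j, |A i j|

/-- Matrix ℓ¹ operator norm: maximum column absolute sum. -/
def matL1 {ι κ : Type*} [Fintype ι] [Fintype κ] (A : Matrix ι κ ℝ) : ℝ :=
  ⨆ j, ∑ i, |A i j|

/-- Matrix ℓ² operator (spectral) norm. -/
def matL2 {ι κ : Type*} [Fintype ι] [Fintype κ] (A : Matrix ι κ ℝ) : ℝ :=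
  sInf {c | 0 ≤ c ∧ ∀ v : κ → ℝ, l2 (A.mulVec v) ≤ c * l2 v}

/-- Entrywise ℓ¹ norm of a matrix. -/
def matE1 {ι κ : Type*} [Fintype ι] [Fintype κ] (A : Matrix ι κ ℝ) : ℝ :=
  ∑ i, ∑ j, |A i j|

/-- Principal submatrix with rows and columns indexed by `S`. -/
def subSq {p : ℕ} (A : Matrix (Fin p) (Fin p) ℝ) (S : Set (Fin p)) : Matrix S S ℝ :=
  A.submatrix (fun i => (i : Fin p)) (fun j => (j : Fin p))

/-- Sub-gaussian real random variable with (sub-gaussian) norm at most `σ`: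
`E[exp(z²/σ²)] ≤ 2`. -/
def SubG {Ω : Type*} [MeasurableSpace Ω] (μ : Measure Ω) (z : Ω → ℝ) (σ : ℝ) : Prop :=
  ∫ ω, Real.exp ((z ω) ^ 2 / σ ^ 2) ∂μ ≤ 2

/-- Sub-gaussian random vector with norm at most `σ`. -/
def SubGVec {Ω : Type*} [MeasurableSpace Ω] {ι : Type*} [Fintype ι]
    (μ : Measure Ω) (Z : Ω → ι → ℝ) (σ : ℝ) : Prop :=
  ∀ u : ι → ℝ, SubG μ (fun ω => dot u (Z ω)) (σ * l2 u)


/-- The product `σ`-algebra on matrices. -/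
instance matrixMeasurableSpace {m n α : Type*} [MeasurableSpace α] :
    MeasurableSpace (Matrix m n α) :=
  (inferInstance : MeasurableSpace (m → n → α))
set_option maxHeartbeats 2000000 in
/-- Lemma S2 of Liang–Tan: deterministic column-wise ℓ¹ error bound
for the first-stage penalized estimator.  Under the compatibility condition for each
column support `S j`, the bound `‖WΓ* - I‖_max ≤ λ̄`, and `Ā₀ ≥ (η₀+1)/(η₀-1)`, any
minimizer `Γhat` of `(1/2)Tr(GᵀWG) - Tr(G) + Ā₀ λ̄ ‖G‖_{L1}` satisfies
`‖Γhat_{·j} - Γ*_{·j}‖₁ ≤ (8Ā₀² ν₀⁻² / (Ā₀-1)) |S j| λ̄` for every `j`. -/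
theorem stmt11 {p : ℕ} (W Γstar : Matrix (Fin p) (Fin p) ℝ) (lamBar ν0 η0 A0 : ℝ)
    (hW : W.PosSemidef) (hlam : 0 < lamBar) (hν0 : 0 < ν0) (hη0 : 1 < η0)
    (hcomp : ∀ j : Fin p, ∀ b : Fin p → ℝ,
      (∑ l ∈ Finset.univ.filter (fun l => Γstar l j = 0), |b l|)
          ≤ η0 * ∑ l ∈ Finset.univ.filter (fun l => Γstar l j ≠ 0), |b l| →
        ν0 ^ 2 * (∑ l ∈ Finset.univ.filter (fun l => Γstar l j ≠ 0), |b l|) ^ 2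
          ≤ (nnz (fun l => Γstar l j) : ℝ) * dot b (W.mulVec b))
    (hinf : matMax (W * Γstar - 1) ≤ lamBar)
    (hA0 : (η0 + 1) / (η0 - 1) ≤ A0)
    (Γhat : Matrix (Fin p) (Fin p) ℝ)
    (hmin : ∀ G : Matrix (Fin p) (Fin p) ℝ,
      (1 / 2) * Matrix.trace (Γhat.transpose * W * Γhat) - Matrix.trace Γhat
          + A0 * lamBar * matE1 Γhat
        ≤ (1 / 2) * Matrix.trace (G.transpose * W * G) - Matrix.trace G
          + A0 * lamBar * matE1 G) :
    ∀ j, l1 (fun i => Γhat i j - Γstar i j)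
      ≤ (8 * A0 ^ 2 * ν0⁻¹ ^ 2 / (A0 - 1)) * (nnz (fun l => Γstar l j) : ℝ) * lamBar := by
  intro j
  have hη1 : (0:ℝ) < η0 - 1 := by linarith
  have hA1 : 1 < A0 := by
    have h2 : (1:ℝ) < (η0 + 1) / (η0 - 1) := by
      rw [lt_div_iff₀ hη1]; linarith
    linarith
  have hA0' : A0 + 1 ≤ η0 * (A0 - 1) := by
    have := (div_le_iff₀ hη1).mp hA0
    nlinarith
  set S : Finset (Fin p) := Finset.univ.filter (fun l => Γstar l j ≠ 0) with hS
  set T : Finset (Fin p) := Finset.univ.filter (fun l => Γstar l j = 0) with hT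
  set βh : Fin p → ℝ := fun i => Γhat i j with hβh
  set βs : Fin p → ℝ := fun i => Γstar i j with hβs
  set Δ : Fin p → ℝ := fun i => Γhat i j - Γstar i j with hΔ
  clear_value βh βs Δ
  set a : ℝ := ∑ i ∈ S, |Δ i| with ha_def
  set b : ℝ := ∑ i ∈ T, |Δ i| with hb_def
  clear_value a b
  have ha0 : 0 ≤ a := by
    rw [ha_def]; exact Finset.sum_nonneg fun i _ => abs_nonneg _
  have hb0 : 0 ≤ b := by
    rw [hb_def]; exact Finset.sum_nonneg fun i _ => abs_nonneg _
  -- quadratic form helper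
  have hq : ∀ u v : Fin p → ℝ, dot u (W.mulVec v) = ∑ i, ∑ l, u i * (W i l * v l) := by
    intro u v
    simp [dot, Matrix.mulVec, dotProduct, Finset.mul_sum]
  -- symmetry of W
  have hsym : ∀ i l, W i l = W l i := by
    intro i l
    conv_lhs => rw [← hW.1]
    simp [Matrix.conjTranspose_apply]
  have hBsymm : ∀ u v : Fin p → ℝ, dot u (W.mulVec v) = dot v (W.mulVec u) := by
    intro u v
    rw [hq, hq, Finset.sum_comm]
    exact Finset.sum_congr rfl fun i _ => Finset.sum_congr rfl fun l _ => by
      rw [hsym l i]; ring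
  -- objective decomposes over columns
  have hobj : ∀ M : Matrix (Fin p) (Fin p) ℝ,
      (1 / 2) * Matrix.trace (M.transpose * W * M) - Matrix.trace M + A0 * lamBar * matE1 M
        = ∑ k, ((1/2) * dot (fun i => M i k) (W.mulVec (fun i => M i k)) - M k k
            + A0 * lamBar * l1 (fun i => M i k)) := by
    intro M
    have h1 : Matrix.trace (M.transpose * W * M)
        = ∑ k, dot (fun i => M i k) (W.mulVec (fun i => M i k)) := by
      rw [Matrix.trace]
      refine Finset.sum_congr rfl fun k _ => ?_
      have hdd : Matrix.diag (M.transpose * W * M) k = ∑ l, ∑ i, M i k * W i l * M l k := by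
        rw [Matrix.diag_apply, Matrix.mul_apply]
        refine Finset.sum_congr rfl fun l _ => ?_
        rw [Matrix.mul_apply, Finset.sum_mul]
        exact Finset.sum_congr rfl fun i _ => by rw [Matrix.transpose_apply]
      rw [hq, hdd, Finset.sum_comm]
      exact Finset.sum_congr rfl fun i _ => Finset.sum_congr rfl fun l _ => by ring
    have h2 : Matrix.trace M = ∑ k, M k k := by
      rw [Matrix.trace]; rfl
    have h3 : matE1 M = ∑ k, l1 (fun i => M i k) := by
      rw [matE1, Finset.sum_comm]
      exact Finset.sum_congr rfl fun k _ => by simp [l1]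
    rw [h1, h2, h3, Finset.mul_sum, Finset.mul_sum, ← Finset.sum_sub_distrib,
      ← Finset.sum_add_distrib]
  -- basic inequality for column j
  have hbase : (1/2) * dot βh (W.mulVec βh) - βh j + A0 * lamBar * l1 βh
      ≤ (1/2) * dot βs (W.mulVec βs) - βs j + A0 * lamBar * l1 βs := by
    have hG := hmin (Γhat.updateCol j βs)
    rw [hobj, hobj] at hG
    rw [← Finset.sum_erase_add _ _ (Finset.mem_univ j),
        ← Finset.sum_erase_add _ _ (Finset.mem_univ j)] at hG
    have heq : ∑ k ∈ Finset.univ.erase j,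
          ((1/2) * dot (fun i => Γhat i k) (W.mulVec (fun i => Γhat i k)) - Γhat k k
            + A0 * lamBar * l1 (fun i => Γhat i k))
        = ∑ k ∈ Finset.univ.erase j,
          ((1/2) * dot (fun i => Γhat.updateCol j βs i k)
              (W.mulVec (fun i => Γhat.updateCol j βs i k)) - Γhat.updateCol j βs k k
            + A0 * lamBar * l1 (fun i => Γhat.updateCol j βs i k)) := by
      refine Finset.sum_congr rfl fun k hk => ?_
      have hk' : k ≠ j := Finset.ne_of_mem_erase hk
      have h1 : (fun i => Γhat.updateCol j βs i k) = fun i => Γhat i k := by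
        funext i; simp [Matrix.updateCol_apply, hk']
      rw [h1]
      congr 1
      congr 1
      simp [Matrix.updateCol_apply, hk']
    have hjcol : (fun i => Γhat.updateCol j βs i j) = βs := by
      funext i; simp [Matrix.updateCol_apply]
    rw [hjcol] at hG
    have hdiag : Γhat.updateCol j βs j j = βs j := by
      simp [Matrix.updateCol_apply]
    rw [hdiag] at hG
    have hβhj : Γhat j j = βh j := by rw [hβh]
    rw [hβhj] at hG
    have hcolh : (fun i => Γhat i j) = βh := hβh.symm
    rw [hcolh] at hG
    linarith [hG, heq]
  -- quadratic expansion
  have hβfun : βh = fun i => Δ i + βs i := by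
    funext i; rw [hβh, hΔ, hβs]; ring
  have hexpand : dot βh (W.mulVec βh)
      = dot Δ (W.mulVec Δ) + 2 * dot Δ (W.mulVec βs) + dot βs (W.mulVec βs) := by
    rw [hβfun, hq, hq, hq, hq]
    have hcross : (∑ i, ∑ l, βs i * (W i l * Δ l)) = ∑ i, ∑ l, Δ i * (W i l * βs l) := by
      have := hBsymm βs Δ
      rwa [hq, hq] at this
    have expand1 : ∀ i, ∑ l, (Δ i + βs i) * (W i l * (Δ l + βs l))
        = ∑ l, (Δ i * (W i l * Δ l) + Δ i * (W i l * βs l) + βs i * (W i l * Δ l)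
            + βs i * (W i l * βs l)) := by
      intro i; exact Finset.sum_congr rfl fun l _ => by ring
    calc ∑ i, ∑ l, (Δ i + βs i) * (W i l * (Δ l + βs l))
        = ∑ i, ∑ l, (Δ i * (W i l * Δ l) + Δ i * (W i l * βs l) + βs i * (W i l * Δ l)
            + βs i * (W i l * βs l)) := Finset.sum_congr rfl fun i _ => expand1 i
      _ = (∑ i, ∑ l, Δ i * (W i l * Δ l)) + (∑ i, ∑ l, Δ i * (W i l * βs l))
            + (∑ i, ∑ l, βs i * (W i l * Δ l)) + (∑ i, ∑ l, βs i * (W i l * βs l)) := by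
          rw [← Finset.sum_add_distrib, ← Finset.sum_add_distrib, ← Finset.sum_add_distrib]
          refine Finset.sum_congr rfl fun i _ => ?_
          rw [← Finset.sum_add_distrib, ← Finset.sum_add_distrib, ← Finset.sum_add_distrib]
      _ = _ := by rw [hcross]; ring
  -- entrywise bound on W βs - e_j
  have hent : ∀ i, |(W.mulVec βs) i - (if i = j then 1 else 0)| ≤ lamBar := by
    intro i
    have h1 : (W * Γstar - 1) i j = (W.mulVec βs) i - (if i = j then 1 else 0) := by
      simp [Matrix.sub_apply, Matrix.mul_apply, Matrix.one_apply, Matrix.mulVec,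
        dotProduct, hβs]
    have h2 : |(W * Γstar - 1) i j| ≤ matMax (W * Γstar - 1) := by
      rw [matMax]
      calc |(W * Γstar - 1) i j| ≤ ⨆ k, |(W * Γstar - 1) i k| :=
            le_ciSup (f := fun k => |(W * Γstar - 1) i k|)
              (Set.Finite.bddAbove (Set.finite_range _)) j
        _ ≤ ⨆ i', ⨆ k, |(W * Γstar - 1) i' k| :=
            le_ciSup (f := fun i' => ⨆ k, |(W * Γstar - 1) i' k|)
              (Set.Finite.bddAbove (Set.finite_range _)) i
    rw [h1] at h2; exact h2.trans hinf
  -- linear term bound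
  have hlin : |dot Δ (W.mulVec βs) - Δ j| ≤ lamBar * l1 Δ := by
    have hΔj : Δ j = ∑ i, Δ i * (if i = j then 1 else 0) := by
      simp
    have hrw : dot Δ (W.mulVec βs) - Δ j
        = ∑ i, Δ i * ((W.mulVec βs) i - (if i = j then 1 else 0)) := by
      rw [dot, hΔj, ← Finset.sum_sub_distrib]
      exact Finset.sum_congr rfl fun i _ => by ring
    rw [hrw]
    calc |∑ i, Δ i * ((W.mulVec βs) i - (if i = j then 1 else 0))|
        ≤ ∑ i, |Δ i * ((W.mulVec βs) i - (if i = j then 1 else 0))| :=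
          Finset.abs_sum_le_sum_abs _ _
      _ ≤ ∑ i, |Δ i| * lamBar := by
          refine Finset.sum_le_sum fun i _ => ?_
          rw [abs_mul]
          exact mul_le_mul_of_nonneg_left (hent i) (abs_nonneg _)
      _ = lamBar * l1 Δ := by rw [l1, ← Finset.sum_mul]; ring
  -- l1 splittings
  have hST : ∀ v : Fin p → ℝ, l1 v = ∑ i ∈ S, |v i| + ∑ i ∈ T, |v i| := by
    intro v
    rw [l1, ← Finset.sum_filter_add_sum_filter_not Finset.univ
      (fun l => Γstar l j ≠ 0) (fun i => |v i|)]
    congr 1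
    refine Finset.sum_congr ?_ fun _ _ => rfl
    rw [hT]
    congr 1
    funext l
    simp [not_not]
  have hl1Δ : l1 Δ = a + b := by rw [hST Δ, ha_def, hb_def]
  have hβsT : ∀ i, i ∈ T → βs i = 0 := by
    intro i hi
    rw [hT] at hi
    simp only [Finset.mem_filter] at hi
    rw [hβs]
    exact hi.2
  have hl1βs : l1 βs = ∑ i ∈ S, |βs i| := by
    rw [hST βs]
    have : ∑ i ∈ T, |βs i| = 0 := Finset.sum_eq_zero fun i hi => by rw [hβsT i hi, abs_zero]
    rw [this, add_zero]
  have hl1βh : l1 βh = ∑ i ∈ S, |βh i| + b := by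
    rw [hST βh, hb_def]
    congr 1
    refine Finset.sum_congr rfl fun i hi => ?_
    have h0 : Γstar i j = 0 := by
      have := hβsT i hi; rwa [hβs] at this
    have : βh i = Δ i := by simp only [hβh, hΔ, h0]; ring
    rw [this]
  have hl1diff : l1 βs - l1 βh ≤ a - b := by
    rw [hl1βs, hl1βh, ha_def]
    have : ∑ i ∈ S, |βs i| - ∑ i ∈ S, |βh i| ≤ ∑ i ∈ S, |Δ i| := by
      rw [← Finset.sum_sub_distrib]
      refine Finset.sum_le_sum fun i _ => ?_
      have h1 : |βs i| - |βh i| ≤ |βs i - βh i| := abs_sub_abs_le_abs_sub _ _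
      have h2 : |βs i - βh i| = |Δ i| := by
        rw [abs_sub_comm, hβh, hβs, hΔ]
      linarith
    linarith
  -- positivity of quadratic form
  have hqΔ0 : 0 ≤ dot Δ (W.mulVec Δ) := by
    have := hW.dotProduct_mulVec_nonneg Δ
    simpa [dot, dotProduct] using this
  have hA0lam : 0 ≤ A0 * lamBar := by positivity
  -- key inequality
  have hkey : (1/2) * dot Δ (W.mulVec Δ)
      ≤ (A0 * lamBar + lamBar) * a - (A0 * lamBar - lamBar) * b := by
    have hΔj' : βh j - βs j = Δ j := by rw [hβh, hβs, hΔ]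
    have h1 : (1/2) * dot Δ (W.mulVec Δ) + (dot Δ (W.mulVec βs) - Δ j)
        ≤ A0 * lamBar * (l1 βs - l1 βh) := by
      have := hbase
      rw [hexpand] at this
      nlinarith [this, hΔj']
    have h2 : -(lamBar * l1 Δ) ≤ dot Δ (W.mulVec βs) - Δ j := by
      linarith [(abs_le.mp hlin).1]
    have h3 : A0 * lamBar * (l1 βs - l1 βh) ≤ A0 * lamBar * (a - b) :=
      mul_le_mul_of_nonneg_left hl1diff hA0lam
    have h4 : (1/2) * dot Δ (W.mulVec Δ) ≤ lamBar * l1 Δ + A0 * lamBar * (a - b) := by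
      linarith
    rw [hl1Δ] at h4
    nlinarith [h4]
  -- cone condition
  clear hmin hobj hbase hexpand hlin hent hST hq hBsymm hsym hinf hl1βs hl1βh hl1diff hβfun hβsT
  have hcone1 : (A0 - 1) * b ≤ (A0 + 1) * a := by
    have h5 : (A0 * lamBar - lamBar) * b ≤ (A0 * lamBar + lamBar) * a := by
      linarith [hkey, hqΔ0]
    have h6 : ((A0 - 1) * b) * lamBar ≤ ((A0 + 1) * a) * lamBar := by
      calc ((A0 - 1) * b) * lamBar = (A0 * lamBar - lamBar) * b := by ring
        _ ≤ (A0 * lamBar + lamBar) * a := h5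
        _ = ((A0 + 1) * a) * lamBar := by ring
    exact le_of_mul_le_mul_right h6 hlam
  have hcone : b ≤ η0 * a := by
    nlinarith [hcone1, hA0', ha0, hA1]
  -- compatibility
  have hnnz : ((nnz (fun l => Γstar l j) : ℕ) : ℝ) = (S.card : ℝ) := by
    have hsupp : Function.support (fun l => Γstar l j) = (S : Set (Fin p)) := by
      ext l
      simp [hS, Function.mem_support]
    rw [nnz, hsupp, Set.ncard_coe_finset]
  have hconeS : (∑ l ∈ Finset.univ.filter (fun l => Γstar l j = 0), |Δ l|)
      ≤ η0 * ∑ l ∈ Finset.univ.filter (fun l => Γstar l j ≠ 0), |Δ l| := by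
    rw [← hT, ← hS, ← ha_def, ← hb_def]
    exact hcone
  have hcompat := hcomp j Δ hconeS
  rw [hnnz, ← hS, ← ha_def] at hcompat
  -- combine
  have hquad : dot Δ (W.mulVec Δ) ≤ 4 * A0 * lamBar * a := by
    have h7 : 0 ≤ (A0 * lamBar - lamBar) * b := by
      apply mul_nonneg _ hb0
      nlinarith [hlam, hA1]
    have h8 : (A0 * lamBar + lamBar) * a ≤ 2 * A0 * lamBar * a := by
      have : lamBar * a ≤ A0 * lamBar * a := by
        apply mul_le_mul_of_nonneg_right _ ha0
        nlinarith [hlam, hA1]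
      linarith
    linarith [hkey, h7, h8]
  have hs0 : (0:ℝ) ≤ (S.card : ℝ) := Nat.cast_nonneg _
  have hmain : ν0 ^ 2 * a ^ 2 ≤ (S.card : ℝ) * (4 * A0 * lamBar * a) := by
    calc ν0 ^ 2 * a ^ 2 ≤ (S.card : ℝ) * dot Δ (W.mulVec Δ) := hcompat
      _ ≤ (S.card : ℝ) * (4 * A0 * lamBar * a) := mul_le_mul_of_nonneg_left hquad hs0
  rw [hβs, hnnz]
  rcases eq_or_lt_of_le ha0 with hz | hpos
  · -- a = 0
    have hbz : b = 0 := by nlinarith [hcone1, hb0, hA1]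
    have hΔz : l1 Δ = 0 := by rw [hl1Δ, ← hz, hbz]; ring
    rw [hΔz]
    have hc : 0 ≤ 8 * A0 ^ 2 * ν0⁻¹ ^ 2 / (A0 - 1) := by
      apply div_nonneg
      · positivity
      · linarith
    have := mul_nonneg (mul_nonneg hc hs0) hlam.le
    linarith
  · -- a > 0
    have haineq : ν0 ^ 2 * a ≤ 4 * A0 * lamBar * (S.card : ℝ) := by
      nlinarith [hmain, hpos]
    have hν2 : (0:ℝ) < ν0 ^ 2 := by positivity
    have hA1' : (0:ℝ) < A0 - 1 := by linarith
    have hkey2 : l1 Δ * (ν0 ^ 2 * (A0 - 1)) ≤ 8 * A0 ^ 2 * (S.card : ℝ) * lamBar := by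
      rw [hl1Δ]
      have h7 : ν0 ^ 2 * ((A0 - 1) * b) ≤ ν0 ^ 2 * ((A0 + 1) * a) :=
        mul_le_mul_of_nonneg_left hcone1 hν2.le
      have h10 : 2 * A0 * (ν0 ^ 2 * a) ≤ 2 * A0 * (4 * A0 * lamBar * (S.card : ℝ)) := by
        apply mul_le_mul_of_nonneg_left haineq
        linarith
      calc (a + b) * (ν0 ^ 2 * (A0 - 1))
          = ν0 ^ 2 * ((A0 - 1) * a) + ν0 ^ 2 * ((A0 - 1) * b) := by ring
        _ ≤ ν0 ^ 2 * ((A0 - 1) * a) + ν0 ^ 2 * ((A0 + 1) * a) := by linarith [h7]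
        _ = 2 * A0 * (ν0 ^ 2 * a) := by ring
        _ ≤ 2 * A0 * (4 * A0 * lamBar * (S.card : ℝ)) := h10
        _ = 8 * A0 ^ 2 * (S.card : ℝ) * lamBar := by ring
    have hpos2 : (0:ℝ) < ν0 ^ 2 * (A0 - 1) := by positivity
    have hfin : l1 Δ ≤ 8 * A0 ^ 2 * (S.card : ℝ) * lamBar / (ν0 ^ 2 * (A0 - 1)) :=
      (le_div_iff₀ hpos2).mpr hkey2
    have hrw : 8 * A0 ^ 2 * ν0⁻¹ ^ 2 / (A0 - 1) * (S.card : ℝ) * lamBar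
        = 8 * A0 ^ 2 * (S.card : ℝ) * lamBar / (ν0 ^ 2 * (A0 - 1)) := by
      field_simp
    rw [hrw]
    exact hfin
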